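/- arXiv:2203.09779 — 3 statements merged into one kernel-verified Lean document; each statement's English description precedes it below -/
import Mathlib

section
/- Let $Z$ be a measure space, $r \in (0,\infty)$, and let $(g_n)$ be a sequence in $L^r(Z)$ that is bounded in $L^r$ norm and converges almost everywhere to a function $g \in L^r(Z)$. Then $\lim_{n\to\infty} \left( \int_Z |g_n|^r - \int_Z |g_n - g|^r \right) = \int_Z |g|^r$. -/
open MeasureTheory Filter
open scoped ENNReal NNReal

/-- Key pointwise inequality for Brezis-Lieb: for every `ε > 0` there is `C ≥ 0` with
`||a+b|^r - |a|^r| ≤ ε |a|^r + C |b|^r` for all reals `a b`. -/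
lemma bl_key (r : ℝ) (hr : 0 < r) {ε : ℝ} (hε : 0 < ε) :
    ∃ C : ℝ, 0 ≤ C ∧ ∀ a b : ℝ, |(|a + b| ^ r - |a| ^ r)| ≤ ε * |a| ^ r + C * |b| ^ r := by
  have hc : ContinuousAt (fun t : ℝ => t ^ r) 1 :=
    Real.continuousAt_rpow_const 1 r (Or.inl one_ne_zero)
  rw [Metric.continuousAt_iff] at hc
  obtain ⟨δ0, hδ0, hδ⟩ := hc ε hε
  set δ : ℝ := min (δ0 / 2) (1 / 2) with hδdef
  have hδpos : 0 < δ := lt_min (by linarith) (by norm_num)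
  have hδ1 : δ < 1 := lt_of_le_of_lt (min_le_right _ _) (by norm_num)
  have hδε : ∀ t : ℝ, |t - 1| ≤ δ → |t ^ r - 1| ≤ ε := by
    intro t ht
    have hd : dist t 1 < δ0 := by
      rw [Real.dist_eq]
      exact lt_of_le_of_lt (ht.trans (min_le_left _ _)) (by linarith)
    have := hδ hd
    rw [Real.dist_eq] at this
    simpa [Real.one_rpow] using this.le
  refine ⟨(1 + 1 / δ) ^ r + (1 / δ) ^ r, by positivity, fun a b => ?_⟩
  rcases le_or_gt |b| (δ * |a|) with hb | hb
  · rcases eq_or_ne a 0 with rfl | ha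
    · have hb0 : b = 0 := abs_nonpos_iff.mp (by simpa using hb)
      subst hb0
      simp [Real.zero_rpow hr.ne']
    · have hA : 0 < |a| := abs_pos.mpr ha
      have hup : |a + b| ≤ (1 + δ) * |a| := by
        have := abs_add_le a b; nlinarith
      have hlo : (1 - δ) * |a| ≤ |a + b| := by
        have h1 : |a| ≤ |a + b| + |b| := by
          have := abs_add_le (a + b) (-b); simpa using this
        nlinarith
      set t : ℝ := |a + b| / |a| with hts
      have ht0 : 0 ≤ t := div_nonneg (abs_nonneg _) (abs_nonneg _)
      have ht1 : t ≤ 1 + δ := by rw [hts, div_le_iff₀ hA]; nlinarith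
      have ht2 : 1 - δ ≤ t := by rw [hts, le_div_iff₀ hA]; nlinarith
      have ht : |t - 1| ≤ δ := abs_le.mpr ⟨by linarith, by linarith⟩
      have heq : |a + b| = t * |a| := by
        rw [hts, div_mul_cancel₀ _ hA.ne']
      have hmul : |a + b| ^ r = t ^ r * |a| ^ r := by
        rw [heq, Real.mul_rpow ht0 (abs_nonneg _)]
      have htr : |t ^ r - 1| ≤ ε := hδε t ht
      have hfin : |(|a + b| ^ r - |a| ^ r)| ≤ ε * |a| ^ r := by
        calc |(|a + b| ^ r - |a| ^ r)| = |(t ^ r - 1) * |a| ^ r| := by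
              rw [sub_mul, one_mul, ← hmul]
          _ = |t ^ r - 1| * |a| ^ r := by
              rw [abs_mul, abs_of_nonneg (Real.rpow_nonneg (abs_nonneg _) _)]
          _ ≤ ε * |a| ^ r :=
              mul_le_mul_of_nonneg_right htr (Real.rpow_nonneg (abs_nonneg _) _)
      have : 0 ≤ ((1 + 1 / δ) ^ r + (1 / δ) ^ r) * |b| ^ r := by positivity
      linarith
  · have hA : |a| ≤ (1 / δ) * |b| := by
      rw [div_mul_eq_mul_div, le_div_iff₀ hδpos]
      nlinarith
    have h1 : |a + b| ≤ (1 + 1 / δ) * |b| := by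
      have := abs_add_le a b
      have h2 : (1 + 1 / δ) * |b| = |b| + (1 / δ) * |b| := by ring
      linarith
    have h2 : |a + b| ^ r ≤ (1 + 1 / δ) ^ r * |b| ^ r := by
      rw [← Real.mul_rpow (by positivity) (abs_nonneg _)]
      exact Real.rpow_le_rpow (abs_nonneg _) h1 hr.le
    have h3 : |a| ^ r ≤ (1 / δ) ^ r * |b| ^ r := by
      rw [← Real.mul_rpow (by positivity) (abs_nonneg _)]
      exact Real.rpow_le_rpow (abs_nonneg _) hA hr.le
    have h4 : |(|a + b| ^ r - |a| ^ r)| ≤ |a + b| ^ r + |a| ^ r := by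
      have hx : 0 ≤ |a + b| ^ r := Real.rpow_nonneg (abs_nonneg _) _
      have hy : 0 ≤ |a| ^ r := Real.rpow_nonneg (abs_nonneg _) _
      rw [abs_le]; constructor <;> linarith
    have h5 : 0 ≤ ε * |a| ^ r := by positivity
    nlinarith

/-- If `eLpNorm f (ofReal r) μ ≤ C < ⊤` then `∫ |f|^r ≤ (C^r).toReal`. -/
lemma bl_int_bound {Z : Type*} [MeasurableSpace Z] (μ : Measure Z) {r : ℝ} (hr : 0 < r)
    {f : Z → ℝ} (hf : MemLp f (ENNReal.ofReal r) μ) {C : ℝ≥0∞} (hC : C ≠ ⊤)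
    (h : eLpNorm f (ENNReal.ofReal r) μ ≤ C) :
    ∫ z, |f z| ^ r ∂μ ≤ (C ^ r).toReal := by
  have hp0 : (ENNReal.ofReal r) ≠ 0 := by simpa [ENNReal.ofReal_eq_zero] using not_le.mpr hr
  have hpt : (ENNReal.ofReal r) ≠ ⊤ := ENNReal.ofReal_ne_top
  have htr : (ENNReal.ofReal r).toReal = r := ENNReal.toReal_ofReal hr.le
  rw [eLpNorm_eq_lintegral_rpow_enorm_toReal hp0 hpt, htr] at h
  have hle : (∫⁻ z, (‖f z‖₊ : ℝ≥0∞) ^ r ∂μ) ≤ C ^ r := by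
    have h2 := ENNReal.rpow_le_rpow h hr.le
    rwa [← ENNReal.rpow_mul, one_div, inv_mul_cancel₀ hr.ne', ENNReal.rpow_one] at h2
  have hmeas : AEStronglyMeasurable (fun z => |f z| ^ r) μ := by
    have h1 : AEStronglyMeasurable (fun z => |f z|) μ := by
      simpa [Real.norm_eq_abs] using hf.1.norm
    exact (Real.continuous_rpow_const hr.le).comp_aestronglyMeasurable h1
  have heq : ∫ z, |f z| ^ r ∂μ = (∫⁻ z, ENNReal.ofReal (|f z| ^ r) ∂μ).toReal :=
    integral_eq_lintegral_of_nonneg_ae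
      (ae_of_all _ fun z => Real.rpow_nonneg (abs_nonneg _) _) hmeas
  have hkey : ∀ z, ENNReal.ofReal (|f z| ^ r) = (‖f z‖₊ : ℝ≥0∞) ^ r := fun z => by
    rw [← ENNReal.ofReal_rpow_of_nonneg (abs_nonneg _) hr.le, ← Real.norm_eq_abs,
      ofReal_norm, enorm_eq_nnnorm]
  rw [heq]
  simp_rw [hkey]
  exact ENNReal.toReal_mono (ENNReal.rpow_ne_top_of_nonneg hr.le hC) hle

/-- **Brézis–Lieb lemma**: if `(g n)` is bounded in `L^r` and converges a.e. to `g ∈ L^r`,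
then `∫ |g n|^r - ∫ |g n - g|^r → ∫ |g|^r`. -/
theorem brezis_lieb {Z : Type*} [MeasurableSpace Z] (μ : Measure Z) (r : ℝ) (hr : 0 < r)
    (g : ℕ → Z → ℝ) (glim : Z → ℝ)
    (hmem : ∀ n, MemLp (g n) (ENNReal.ofReal r) μ)
    (hbdd : ∃ C : ℝ≥0∞, C ≠ ⊤ ∧ ∀ n, eLpNorm (g n) (ENNReal.ofReal r) μ ≤ C)
    (hae : ∀ᵐ z ∂μ, Tendsto (fun n => g n z) atTop (nhds (glim z)))
    (hglim : MemLp glim (ENNReal.ofReal r) μ) :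
    Tendsto
      (fun n => (∫ z, |g n z| ^ r ∂μ) - ∫ z, |g n z - glim z| ^ r ∂μ)
      atTop (nhds (∫ z, |glim z| ^ r ∂μ)) := by
  obtain ⟨C, hCt, hC⟩ := hbdd
  have hp0 : (ENNReal.ofReal r) ≠ 0 := by simpa [ENNReal.ofReal_eq_zero] using not_le.mpr hr
  have hpt : (ENNReal.ofReal r) ≠ ⊤ := ENNReal.ofReal_ne_top
  have htr : (ENNReal.ofReal r).toReal = r := ENNReal.toReal_ofReal hr.le
  have hsubmem : ∀ n, MemLp (fun z => g n z - glim z) (ENNReal.ofReal r) μ :=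
    fun n => (hmem n).sub hglim
  have hint1 : ∀ n, Integrable (fun z => |g n z| ^ r) μ := fun n => by
    simpa [Real.norm_eq_abs, htr] using (hmem n).integrable_norm_rpow hp0 hpt
  have hint2 : ∀ n, Integrable (fun z => |g n z - glim z| ^ r) μ := fun n => by
    simpa [Real.norm_eq_abs, htr] using (hsubmem n).integrable_norm_rpow hp0 hpt
  have hintg : Integrable (fun z => |glim z| ^ r) μ := by
    simpa [Real.norm_eq_abs, htr] using hglim.integrable_norm_rpow hp0 hpt
  -- uniform bound on ∫ |g n - glim|^r
  set D : ℝ≥0∞ := ENNReal.LpAddConst (ENNReal.ofReal r) * (C + eLpNorm glim (ENNReal.ofReal r) μ)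
    with hD
  have hDt : D ≠ ⊤ :=
    ENNReal.mul_ne_top (ENNReal.LpAddConst_lt_top _).ne
      (ENNReal.add_ne_top.mpr ⟨hCt, hglim.eLpNorm_ne_top⟩)
  set M : ℝ := (D ^ r).toReal with hM
  have hM0 : 0 ≤ M := ENNReal.toReal_nonneg
  have hMle : ∀ n, ∫ z, |g n z - glim z| ^ r ∂μ ≤ M := by
    intro n
    apply bl_int_bound μ hr (hsubmem n) hDt
    refine le_trans (eLpNorm_sub_le' (hmem n).1 hglim.1 _) ?_
    rw [hD]; gcongr; exact hC n
  set F : ℕ → Z → ℝ := fun n z => |g n z| ^ r - |g n z - glim z| ^ r - |glim z| ^ r with hF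
  have hFint : ∀ n, Integrable (F n) μ := fun n => ((hint1 n).sub (hint2 n)).sub hintg
  have hFlim : ∀ᵐ z ∂μ, Tendsto (fun n => F n z) atTop (nhds 0) := by
    filter_upwards [hae] with z hz
    have hcont : Continuous (fun x : ℝ => |x| ^ r) :=
      (Real.continuous_rpow_const hr.le).comp continuous_abs
    have h1 : Tendsto (fun n => |g n z| ^ r) atTop (nhds (|glim z| ^ r)) :=
      (hcont.tendsto (glim z)).comp hz
    have h2 : Tendsto (fun n => g n z - glim z) atTop (nhds 0) := by
      simpa using hz.sub_const (glim z)
    have h3 : Tendsto (fun n => |g n z - glim z| ^ r) atTop (nhds 0) := by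
      have := (hcont.tendsto 0).comp h2
      simpa [Real.zero_rpow hr.ne', Function.comp_def] using this
    have h4 := (h1.sub h3).sub_const (|glim z| ^ r)
    simpa using h4
  have hkey : Tendsto (fun n => ∫ z, F n z ∂μ) atTop (nhds 0) := by
    rw [NormedAddCommGroup.tendsto_nhds_zero]
    intro ε hε
    set ε₀ : ℝ := ε / (2 * (M + 1)) with hε₀
    have hε₀pos : 0 < ε₀ := by
      apply div_pos hε; nlinarith
    obtain ⟨C₀, hC₀0, hC₀⟩ := bl_key r hr hε₀pos
    set W : ℕ → Z → ℝ := fun n z => max (|F n z| - ε₀ * |g n z - glim z| ^ r) 0 with hW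
    have hptw : ∀ n z, |F n z| ≤ ε₀ * |g n z - glim z| ^ r + (C₀ + 1) * |glim z| ^ r := by
      intro n z
      have h := hC₀ (g n z - glim z) (glim z)
      have hgz : g n z - glim z + glim z = g n z := by ring
      rw [hgz] at h
      have h0 : (0:ℝ) ≤ |glim z| ^ r := Real.rpow_nonneg (abs_nonneg _) _
      have habs : |F n z| ≤ |(|g n z| ^ r - |g n z - glim z| ^ r)| + |glim z| ^ r := by
        have hx := abs_abs_sub_abs_le_abs_sub (|g n z| ^ r - |g n z - glim z| ^ r) (|glim z| ^ r)
        rw [abs_le]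
        constructor <;>
          · have := abs_le.mp (le_refl |(|g n z| ^ r - |g n z - glim z| ^ r)|)
            have h5 := neg_abs_le (|g n z| ^ r - |g n z - glim z| ^ r)
            have h6 := le_abs_self (|g n z| ^ r - |g n z - glim z| ^ r)
            simp only [hF]
            linarith
      linarith
    have hWbound : ∀ n z, W n z ≤ (C₀ + 1) * |glim z| ^ r := by
      intro n z
      apply max_le _ (by positivity)
      have := hptw n z; linarith
    have hW0 : ∀ n z, 0 ≤ W n z := fun n z => le_max_right _ _
    have hWle : ∀ n z, |F n z| ≤ W n z + ε₀ * |g n z - glim z| ^ r := by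
      intro n z
      have := le_max_left (|F n z| - ε₀ * |g n z - glim z| ^ r) (0:ℝ)
      simp only [hW]
      linarith
    have hFm : ∀ n, AEStronglyMeasurable (F n) μ :=
      fun n => ((hint1 n).1.sub (hint2 n).1).sub hintg.1
    have hWm : ∀ n, AEStronglyMeasurable (W n) μ := by
      intro n
      have habs : AEMeasurable (fun z => |F n z|) μ := by
        simpa [Real.norm_eq_abs] using (hFm n).norm.aemeasurable
      exact ((habs.sub ((hint2 n).1.aemeasurable.const_mul ε₀)).max
        aemeasurable_const).aestronglyMeasurable
    have hWint : ∀ n, Integrable (W n) μ := by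
      intro n
      refine Integrable.mono (hintg.const_mul (C₀ + 1)) (hWm n) (ae_of_all _ fun z => ?_)
      rw [Real.norm_eq_abs, Real.norm_eq_abs, abs_of_nonneg (hW0 n z),
        abs_of_nonneg (by positivity)]
      exact hWbound n z
    have hWtend : Tendsto (fun n => ∫ z, W n z ∂μ) atTop (nhds 0) := by
      have hdct := tendsto_integral_of_dominated_convergence
        (fun z => (C₀ + 1) * |glim z| ^ r) hWm (hintg.const_mul _)
        (fun n => ae_of_all _ fun z => by
          rw [Real.norm_eq_abs, abs_of_nonneg (hW0 n z)]; exact hWbound n z)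
        (by
          filter_upwards [hFlim] with z hz
          have habs : Tendsto (fun n => |F n z|) atTop (nhds 0) := by
            simpa using hz.abs
          refine squeeze_zero (fun n => hW0 n z) (fun n => ?_) habs
          apply max_le _ (abs_nonneg _)
          have : 0 ≤ ε₀ * |g n z - glim z| ^ r := by positivity
          linarith)
      simpa using hdct
    have hev : ∀ᶠ n in atTop, ∫ z, W n z ∂μ < ε / 2 :=
      hWtend.eventually_lt_const (by linarith)
    filter_upwards [hev] with n hn
    have h1 : ‖∫ z, F n z ∂μ‖ ≤ ∫ z, |F n z| ∂μ := by
      simpa [Real.norm_eq_abs] using norm_integral_le_integral_norm (F n)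
    have h2 : ∫ z, |F n z| ∂μ ≤ (∫ z, W n z ∂μ) + ε₀ * M := by
      have h3 : ∫ z, |F n z| ∂μ ≤ ∫ z, (W n z + ε₀ * |g n z - glim z| ^ r) ∂μ :=
        integral_mono (hFint n).abs ((hWint n).add ((hint2 n).const_mul ε₀))
          (fun z => hWle n z)
      rw [integral_add (hWint n) ((hint2 n).const_mul ε₀), integral_const_mul] at h3
      have h4 := hMle n
      nlinarith [hε₀pos.le]
    have hεM : ε₀ * M ≤ ε / 2 := by
      rw [hε₀, div_mul_eq_mul_div, div_le_div_iff₀ (by nlinarith) (by norm_num)]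
      nlinarith
    calc ‖∫ z, F n z ∂μ‖ ≤ ∫ z, |F n z| ∂μ := h1
      _ ≤ (∫ z, W n z ∂μ) + ε₀ * M := h2
      _ < ε := by linarith
  have heqn : ∀ n, ∫ z, F n z ∂μ =
      ((∫ z, |g n z| ^ r ∂μ) - ∫ z, |g n z - glim z| ^ r ∂μ) - ∫ z, |glim z| ^ r ∂μ := by
    intro n
    simp only [hF]
    have h1 : Integrable (fun z => |g n z| ^ r - |g n z - glim z| ^ r) μ :=
      (hint1 n).sub (hint2 n)
    rw [integral_sub h1 hintg, integral_sub (hint1 n) (hint2 n)]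
  have hfin := hkey.add_const (∫ z, |glim z| ^ r ∂μ)
  rw [zero_add] at hfin
  refine hfin.congr fun n => ?_
  rw [heqn n]; ring
end

section
/- Let $X$ be a measure space and $0 < p < q < r < \infty$. Let $(f_n)$ be a sequence of measurable functions that is bounded in both $L^p(X)$ and $L^r(X)$, and suppose there exists $\alpha > 0$ such that $\|f_n\|_{L^q} \ge \alpha$ for all $n$. Then there exist $\delta, \epsilon > 0$ such that for all $n$, the measure of the set $\{x \in X : |f_n(x)| > \epsilon\}$ is at least $\delta$. -/
open MeasureTheory Filter
open scoped ENNReal NNReal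

private lemma pqr_pointwise (p q r ε M : ℝ) (hp : 0 < p) (hpq : p < q) (hqr : q < r)
    (hε : 0 < ε) (hM : 0 < M) (a : ℝ≥0∞) (ha : a ≠ ⊤) :
    a ^ q ≤ ENNReal.ofReal (ε ^ (q - p)) * a ^ p +
      ENNReal.ofReal (M ^ q) * ({b : ℝ≥0∞ | ENNReal.ofReal ε < b}.indicator (fun _ => 1) a) +
      ENNReal.ofReal (M ^ (q - r)) * a ^ r := by
  rcases eq_or_ne a 0 with rfl | ha0
  · rw [ENNReal.zero_rpow_of_pos (hp.trans hpq)]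
    exact zero_le
  rcases le_or_gt a (ENNReal.ofReal ε) with h1 | h1
  · calc a ^ q = a ^ (q - p) * a ^ p := by
          rw [← ENNReal.rpow_add _ _ ha0 ha]; ring_nf
      _ ≤ ENNReal.ofReal (ε ^ (q - p)) * a ^ p := by
          gcongr
          rw [← ENNReal.ofReal_rpow_of_pos hε]
          exact ENNReal.rpow_le_rpow h1 (by linarith)
      _ ≤ _ := le_add_of_le_of_nonneg (le_add_of_le_of_nonneg le_rfl (zero_le)) (zero_le)
  rcases le_or_gt a (ENNReal.ofReal M) with h2 | h2
  · have : a ^ q ≤ ENNReal.ofReal (M ^ q) * ({b : ℝ≥0∞ | ENNReal.ofReal ε < b}.indicator (fun _ => 1) a) := by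
      simp only [Set.indicator_apply, Set.mem_setOf_eq, if_pos h1, mul_one]
      rw [← ENNReal.ofReal_rpow_of_pos hM]
      exact ENNReal.rpow_le_rpow h2 (by linarith)
    calc a ^ q ≤ _ := this
      _ ≤ _ := le_add_of_le_of_nonneg (le_add_of_nonneg_of_le (zero_le) le_rfl) (zero_le)
  · have : a ^ q ≤ ENNReal.ofReal (M ^ (q - r)) * a ^ r := by
      have h3 : a ^ q = a ^ (q - r) * a ^ r := by
        rw [← ENNReal.rpow_add _ _ ha0 ha]; ring_nf
      rw [h3]
      gcongr
      have e1 : a ^ (q - r) = (a ^ (r - q))⁻¹ := by rw [← ENNReal.rpow_neg]; ring_nf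
      have e2 : (ENNReal.ofReal M) ^ (q - r) = ((ENNReal.ofReal M) ^ (r - q))⁻¹ := by
        rw [← ENNReal.rpow_neg]; ring_nf
      rw [← ENNReal.ofReal_rpow_of_pos hM, e1, e2]
      exact ENNReal.inv_le_inv.mpr (ENNReal.rpow_le_rpow h2.le (by linarith))
    calc a ^ q ≤ _ := this
      _ ≤ _ := le_add_of_nonneg_of_le (zero_le) le_rfl

/-- **The `pqr` lemma** (Fröhlich–Lieb–Loss): a sequence bounded in `L^p` and `L^r` whose
`L^q` norms are bounded below (for `p < q < r`) has superlevel sets of measure uniformly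
bounded below. -/
theorem pqr_lemma {X : Type*} [MeasurableSpace X] (μ : Measure X)
    (p q r : ℝ) (hp : 0 < p) (hpq : p < q) (hqr : q < r)
    (f : ℕ → X → ℝ) (hmeas : ∀ n, AEStronglyMeasurable (f n) μ)
    (hbdd : ∃ C : ℝ≥0∞, C ≠ ⊤ ∧ ∀ n,
      eLpNorm (f n) (ENNReal.ofReal p) μ ≤ C ∧ eLpNorm (f n) (ENNReal.ofReal r) μ ≤ C)
    (α : ℝ) (hα : 0 < α)
    (hlow : ∀ n, ENNReal.ofReal α ≤ eLpNorm (f n) (ENNReal.ofReal q) μ) :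
    ∃ δ ε : ℝ, 0 < δ ∧ 0 < ε ∧ ∀ n,
      ENNReal.ofReal δ ≤ μ {x | ε < |f n x|} := by
  obtain ⟨C, hCtop, hC⟩ := hbdd
  have hq : 0 < q := hp.trans hpq
  have hr : 0 < r := hq.trans hqr
  set C' : ℝ := max C.toReal 1 with hC'def
  have hC'1 : (1:ℝ) ≤ C' := le_max_right _ _
  have hC'0 : (0:ℝ) < C' := lt_of_lt_of_le one_pos hC'1
  have hCle : C ≤ ENNReal.ofReal C' := by
    calc C = ENNReal.ofReal C.toReal := (ENNReal.ofReal_toReal hCtop).symm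
      _ ≤ _ := ENNReal.ofReal_le_ofReal (le_max_left _ _)
  set αq : ℝ := α ^ q with hαqdef
  have hαq : 0 < αq := Real.rpow_pos_of_pos hα q
  set ε : ℝ := (αq / (4 * C' ^ p)) ^ (q - p)⁻¹ with hεdef
  have hε : 0 < ε := Real.rpow_pos_of_pos (by positivity) _
  have hεpow : ε ^ (q - p) = αq / (4 * C' ^ p) :=
    Real.rpow_inv_rpow (by positivity) (by linarith)
  set M : ℝ := (4 * C' ^ r / αq) ^ (r - q)⁻¹ with hMdef
  have hM : 0 < M := Real.rpow_pos_of_pos (by positivity) _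
  have hMpow : M ^ (r - q) = 4 * C' ^ r / αq :=
    Real.rpow_inv_rpow (by positivity) (by linarith)
  have hMqr : M ^ (q - r) = αq / (4 * C' ^ r) := by
    have : q - r = -(r - q) := by ring
    rw [this, Real.rpow_neg hM.le, hMpow]
    rw [inv_div]
  refine ⟨αq / (2 * M ^ q), ε, by positivity, hε, fun n => ?_⟩
  set g : X → ℝ≥0∞ := fun x => (‖f n x‖₊ : ℝ≥0∞) with hgdef
  have hg : AEMeasurable g μ := (hmeas n).enorm
  have hset : {b : X | ENNReal.ofReal ε < g b} = {x | ε < |f n x|} := by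
    ext x
    simp only [Set.mem_setOf_eq, hgdef]
    rw [show ((‖f n x‖₊ : ℝ≥0∞)) = ENNReal.ofReal |f n x| from Real.enorm_eq_ofReal_abs _, ENNReal.ofReal_lt_ofReal_iff_of_nonneg hε.le]
  set S := {x | ε < |f n x|} with hSdef
  have hgtop : ∀ x, g x ≠ ⊤ := fun x => ENNReal.coe_ne_top
  -- eLpNorm as lintegral
  have hLp : ∀ s : ℝ, 0 < s →
      eLpNorm (f n) (ENNReal.ofReal s) μ = (∫⁻ x, g x ^ s ∂μ) ^ (1 / s) := by
    intro s hs
    rw [eLpNorm_eq_lintegral_rpow_enorm_toReal (ENNReal.ofReal_pos.mpr hs).ne' ENNReal.ofReal_ne_top,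
      ENNReal.toReal_ofReal hs.le]
    rfl
  have hup : ∀ s : ℝ, 0 < s → eLpNorm (f n) (ENNReal.ofReal s) μ ≤ C →
      ∫⁻ x, g x ^ s ∂μ ≤ ENNReal.ofReal (C' ^ s) := by
    intro s hs h
    rw [hLp s hs] at h
    have := ENNReal.rpow_le_rpow (h.trans hCle) hs.le
    rwa [one_div, ENNReal.rpow_inv_rpow hs.ne', ENNReal.ofReal_rpow_of_pos hC'0] at this
  have hIp : ∫⁻ x, g x ^ p ∂μ ≤ ENNReal.ofReal (C' ^ p) := hup p hp (hC n).1
  have hIr : ∫⁻ x, g x ^ r ∂μ ≤ ENNReal.ofReal (C' ^ r) := hup r hr (hC n).2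
  have hIq : ENNReal.ofReal αq ≤ ∫⁻ x, g x ^ q ∂μ := by
    have h := hlow n
    rw [hLp q hq] at h
    have := ENNReal.rpow_le_rpow h hq.le
    rwa [one_div, ENNReal.rpow_inv_rpow hq.ne', ENNReal.ofReal_rpow_of_pos hα] at this
  -- measurability
  have hgp : AEMeasurable (fun x => g x ^ p) μ := hg.pow_const p
  have hgr : AEMeasurable (fun x => g x ^ r) μ := hg.pow_const r
  -- the splitting bound
  have hsplit : ∫⁻ x, g x ^ q ∂μ ≤
      ENNReal.ofReal (ε ^ (q - p)) * ∫⁻ x, g x ^ p ∂μ +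
      ENNReal.ofReal (M ^ q) * μ S +
      ENNReal.ofReal (M ^ (q - r)) * ∫⁻ x, g x ^ r ∂μ := by
    have step1 : ∫⁻ x, g x ^ q ∂μ ≤
        ∫⁻ x, (ENNReal.ofReal (ε ^ (q - p)) * g x ^ p +
          ENNReal.ofReal (M ^ q) * ({b : ℝ≥0∞ | ENNReal.ofReal ε < b}.indicator (fun _ => 1) (g x)) +
          ENNReal.ofReal (M ^ (q - r)) * g x ^ r) ∂μ :=
      lintegral_mono fun x => pqr_pointwise p q r ε M hp hpq hqr hε hM (g x) (hgtop x)
    have hA : AEMeasurable (fun x => ENNReal.ofReal (ε ^ (q - p)) * g x ^ p) μ :=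
      hgp.const_mul _
    have hD : AEMeasurable (fun x => ENNReal.ofReal (M ^ (q - r)) * g x ^ r) μ :=
      hgr.const_mul _
    have hBeq : (fun x => ENNReal.ofReal (M ^ q) *
        ({b : ℝ≥0∞ | ENNReal.ofReal ε < b}.indicator (fun _ => 1) (g x))) =
        S.indicator (fun _ => ENNReal.ofReal (M ^ q)) := by
      funext x
      have hiff : ENNReal.ofReal ε < g x ↔ x ∈ S := by
        show _ ↔ ε < |f n x|
        show ENNReal.ofReal ε < (‖f n x‖₊ : ℝ≥0∞) ↔ _
        rw [show ((‖f n x‖₊ : ℝ≥0∞)) = ENNReal.ofReal |f n x| from Real.enorm_eq_ofReal_abs _, ENNReal.ofReal_lt_ofReal_iff_of_nonneg hε.le]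
      by_cases hx : x ∈ S
      · simp [Set.indicator_apply, hiff, hx]
      · simp [Set.indicator_apply, hiff, hx]
    calc ∫⁻ x, g x ^ q ∂μ ≤ _ := step1
      _ = (∫⁻ x, ENNReal.ofReal (ε ^ (q - p)) * g x ^ p ∂μ) +
          ((∫⁻ x, ENNReal.ofReal (M ^ q) *
            ({b : ℝ≥0∞ | ENNReal.ofReal ε < b}.indicator (fun _ => 1) (g x)) ∂μ) +
           (∫⁻ x, ENNReal.ofReal (M ^ (q - r)) * g x ^ r ∂μ)) := by
          simp_rw [add_assoc]
          rw [lintegral_add_left' hA]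
          congr 1
          exact lintegral_add_right' _ hD
      _ ≤ ENNReal.ofReal (ε ^ (q - p)) * (∫⁻ x, g x ^ p ∂μ) +
          (ENNReal.ofReal (M ^ q) * μ S +
           ENNReal.ofReal (M ^ (q - r)) * (∫⁻ x, g x ^ r ∂μ)) := by
          gcongr
          · exact (lintegral_const_mul'' _ hgp).le
          · rw [hBeq]
            exact lintegral_indicator_const_le _ _
          · exact (lintegral_const_mul'' _ hgr).le
      _ = _ := by rw [add_assoc]
  -- numeric values of the two small terms
  have hC'p : (0:ℝ) < C' ^ p := Real.rpow_pos_of_pos hC'0 p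
  have hC'r : (0:ℝ) < C' ^ r := Real.rpow_pos_of_pos hC'0 r
  have hterm1 : ENNReal.ofReal (ε ^ (q - p)) * ENNReal.ofReal (C' ^ p) =
      ENNReal.ofReal (αq / 4) := by
    rw [← ENNReal.ofReal_mul (by positivity), hεpow]
    congr 1
    field_simp
  have hterm3 : ENNReal.ofReal (M ^ (q - r)) * ENNReal.ofReal (C' ^ r) =
      ENNReal.ofReal (αq / 4) := by
    rw [← ENNReal.ofReal_mul (by positivity), hMqr]
    congr 1
    field_simp
  have hmain : ENNReal.ofReal αq ≤
      ENNReal.ofReal (αq / 4) + ENNReal.ofReal (M ^ q) * μ S + ENNReal.ofReal (αq / 4) := by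
    refine hIq.trans (hsplit.trans ?_)
    gcongr ?_ + _ + ?_
    · rw [← hterm1]; gcongr
    · rw [← hterm3]; gcongr
  have h2 : ENNReal.ofReal (αq / 2) ≤ ENNReal.ofReal (M ^ q) * μ S := by
    have hsum : ENNReal.ofReal αq =
        (ENNReal.ofReal (αq / 4) + ENNReal.ofReal (αq / 4)) + ENNReal.ofReal (αq / 2) := by
      rw [← ENNReal.ofReal_add (by positivity) (by positivity),
        ← ENNReal.ofReal_add (by positivity) (by positivity)]
      congr 1
      ring
    have hre : ENNReal.ofReal (αq / 4) + ENNReal.ofReal (M ^ q) * μ S + ENNReal.ofReal (αq / 4)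
        = (ENNReal.ofReal (αq / 4) + ENNReal.ofReal (αq / 4)) + ENNReal.ofReal (M ^ q) * μ S := by
      ring
    rw [hsum, hre] at hmain
    exact (ENNReal.add_le_add_iff_left (by finiteness)).mp hmain
  have hMq : (0:ℝ) < M ^ q := Real.rpow_pos_of_pos hM q
  have : αq / (2 * M ^ q) = (αq / 2) / (M ^ q) := by
    rw [div_div]
  rw [this, ENNReal.ofReal_div_of_pos hMq]
  rw [ENNReal.div_le_iff (by simp [hMq]) ENNReal.ofReal_ne_top]
  rwa [mul_comm] at h2
end

section
/- Let $q > 2$, let $\mathcal{H}$ be a separable Hilbert space, $Y$ a measure space, and $A : \mathcal{H} \to L^q(Y)$ a nonzero bounded linear operator. Set $\mathcal{S} = \sup\{ \|Af\|_{L^q}^q : \|f\|_{\mathcal{H}} = 1 \}$. Suppose $(f_n) \subset \mathcal{H}$ satisfies: $\|f_n\|_{\mathcal{H}} = 1$; $\|Af_n\|_{L^q}^q \to \mathcal{S}$; $f_n \rightharpoonup f$ weakly in $\mathcal{H}$ with $f \ne 0$; and $Af_n \to Af$ almost everywhere on $Y$. Then $f_n \to f$ strongly in $\mathcal{H}$ and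 $\|Af\|_{L^q}^q = \mathcal{S}$. -/
open MeasureTheory Filter
open scoped ENNReal NNReal RealInnerProductSpace

lemma mvt_rpow {q : ℝ} (hq : 1 ≤ q) {a b : ℝ} (hb : 0 ≤ b) (hba : b ≤ a) :
    a ^ q - b ^ q ≤ q * a ^ (q - 1) * (a - b) := by
  have ha : 0 ≤ a := hb.trans hba
  have key : ‖a ^ q - b ^ q‖ ≤ q * a ^ (q - 1) * ‖a - b‖ := by
    apply Convex.norm_image_sub_le_of_norm_hasDerivWithin_le
      (f := fun t : ℝ => t ^ q) (f' := fun t : ℝ => q * t ^ (q - 1)) (s := Set.Icc b a)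
      (fun x _ => (Real.hasDerivAt_rpow_const (Or.inr hq)).hasDerivWithinAt)
      ?_ (convex_Icc _ _) ⟨le_refl b, hba⟩ ⟨hba, le_refl a⟩
    intro x hx
    have hx0 : (0:ℝ) ≤ x := hb.trans hx.1
    have h1 : x ^ (q - 1) ≤ a ^ (q - 1) :=
      Real.rpow_le_rpow hx0 hx.2 (by linarith)
    have h2 : (0:ℝ) ≤ x ^ (q - 1) := Real.rpow_nonneg hx0 _
    rw [Real.norm_eq_abs, abs_of_nonneg (by positivity)]
    have hq0 : (0:ℝ) < q := by linarith
    exact mul_le_mul_of_nonneg_left h1 hq0.le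
  calc a ^ q - b ^ q ≤ ‖a ^ q - b ^ q‖ := le_abs_self _
    _ ≤ q * a ^ (q - 1) * ‖a - b‖ := key
    _ = q * a ^ (q - 1) * (a - b) := by rw [Real.norm_eq_abs, abs_of_nonneg (by linarith)]

lemma abs_rpow_sub_abs_rpow {q : ℝ} (hq : 1 ≤ q) (a b : ℝ) :
    abs (|a + b| ^ q - |a| ^ q) ≤ q * (|a| + |b|) ^ (q - 1) * |b| := by
  have hab : |a + b| ≤ |a| + |b| := abs_add_le a b
  have hba : abs (|a + b| - |a|) ≤ |b| := by
    have := abs_abs_sub_abs_le_abs_sub (a + b) a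
    simpa using this
  have hmul : ∀ x y : ℝ, 0 ≤ y → y ≤ x → x ≤ |a| + |b| → x - y ≤ |b| →
      x ^ q - y ^ q ≤ q * (|a| + |b|) ^ (q - 1) * |b| := by
    intro x y hy hyx hxle hdiff
    have h1 := mvt_rpow hq hy hyx
    have h2 : x ^ (q - 1) ≤ (|a| + |b|) ^ (q - 1) :=
      Real.rpow_le_rpow (hy.trans hyx) hxle (by linarith)
    have h3 : (0:ℝ) ≤ x ^ (q-1) := Real.rpow_nonneg (hy.trans hyx) _
    have h4 : (0:ℝ) ≤ x - y := by linarith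
    have hq0 : (0:ℝ) ≤ q := by linarith
    calc x ^ q - y ^ q ≤ q * x ^ (q-1) * (x - y) := h1
      _ ≤ q * (|a| + |b|) ^ (q - 1) * |b| := by
          apply mul_le_mul (mul_le_mul_of_nonneg_left h2 hq0) hdiff h4
          positivity
  rcases le_total (|a|) (|a + b|) with h | h
  · have hmono : |a| ^ q ≤ |a + b| ^ q := Real.rpow_le_rpow (abs_nonneg a) h (by linarith)
    rw [abs_of_nonneg (by linarith)]
    exact hmul _ _ (abs_nonneg a) h hab (by rcases abs_le.1 hba with ⟨h1,h2⟩; linarith)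
  · have hmono : |a + b| ^ q ≤ |a| ^ q := Real.rpow_le_rpow (abs_nonneg _) h (by linarith)
    rw [abs_of_nonpos (by linarith)]
    have hle : |a| ≤ |a| + |b| := le_add_of_nonneg_right (abs_nonneg b)
    have h5 := hmul (|a|) (|a + b|) (abs_nonneg _) h hle (by rcases abs_le.1 hba with ⟨h1,h2⟩; linarith)
    linarith

lemma pointwise_eps {q : ℝ} (hq : 1 ≤ q) {ε : ℝ} (hε : 0 < ε) :
    ∃ C : ℝ, 1 ≤ C ∧ ∀ a b : ℝ,
      abs (|a + b| ^ q - |a| ^ q - |b| ^ q) ≤ ε * |a| ^ q + C * |b| ^ q := by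
  have hq0 : (0:ℝ) < q := by linarith
  set δ : ℝ := min 1 (ε / (q * 2 ^ (q - 1))) with hδdef
  have h2q : (0:ℝ) < 2 ^ (q - 1) := Real.rpow_pos_of_pos two_pos _
  have hδpos : 0 < δ := lt_min one_pos (div_pos hε (by positivity))
  have hδ1 : δ ≤ 1 := min_le_left _ _
  have hδε : q * 2 ^ (q - 1) * δ ≤ ε := by
    have : δ ≤ ε / (q * 2 ^ (q - 1)) := min_le_right _ _
    rw [le_div_iff₀ (by positivity)] at this
    linarith
  have hCpos : (0:ℝ) ≤ q * (1/δ + 1) ^ (q - 1) := by positivity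
  refine ⟨q * (1/δ + 1) ^ (q - 1) + 1, by linarith, fun a b => ?_⟩
  have key := abs_rpow_sub_abs_rpow hq a b
  have habs : abs (|a + b| ^ q - |a| ^ q - |b| ^ q)
      ≤ q * (|a| + |b|) ^ (q - 1) * |b| + |b| ^ q := by
    have h1 : (0:ℝ) ≤ |b| ^ q := Real.rpow_nonneg (abs_nonneg b) q
    have := abs_sub_abs_le_abs_sub (|a + b| ^ q - |a| ^ q) (|b| ^ q)
    calc abs (|a + b| ^ q - |a| ^ q - |b| ^ q)
        ≤ abs (|a + b| ^ q - |a| ^ q) + abs (|b| ^ q) := abs_sub _ _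
      _ ≤ q * (|a| + |b|) ^ (q - 1) * |b| + |b| ^ q := by
          rw [abs_of_nonneg h1]; linarith
  rcases le_total (|b|) (δ * |a|) with h | h
  · -- small b case
    have ha0 : (0:ℝ) ≤ |a| := abs_nonneg a
    have hsum : |a| + |b| ≤ (1 + δ) * |a| := by linarith
    have hK : q * (|a| + |b|) ^ (q - 1) * |b| ≤ ε * |a| ^ q := by
      have e1 : (|a| + |b|) ^ (q - 1) ≤ ((1+δ) * |a|) ^ (q - 1) :=
        Real.rpow_le_rpow (by positivity) hsum (by linarith)
      have e2 : ((1+δ) * |a|) ^ (q - 1) = (1+δ) ^ (q-1) * |a| ^ (q-1) :=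
        Real.mul_rpow (by positivity) ha0
      have e3 : (1+δ) ^ (q-1) ≤ 2 ^ (q-1) :=
        Real.rpow_le_rpow (by positivity) (by linarith) (by linarith)
      have e4 : (0:ℝ) ≤ |a| ^ (q-1) := Real.rpow_nonneg ha0 _
      have e5 : |a| ^ (q-1) * |a| = |a| ^ q := by
        rw [show q = (q-1)+1 by ring, Real.rpow_add_of_nonneg ha0 (by linarith) zero_le_one,
          Real.rpow_one]
        norm_num
      calc q * (|a| + |b|) ^ (q - 1) * |b|
          ≤ q * ((1+δ) ^ (q-1) * |a| ^ (q-1)) * (δ * |a|) := by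
            rw [← e2]
            apply mul_le_mul (mul_le_mul_of_nonneg_left e1 hq0.le) h (abs_nonneg b)
            positivity
        _ = (q * (1+δ) ^ (q-1) * δ) * (|a| ^ (q-1) * |a|) := by ring
        _ ≤ (q * 2 ^ (q-1) * δ) * (|a| ^ (q-1) * |a|) := by
            exact mul_le_mul_of_nonneg_right
              (mul_le_mul_of_nonneg_right (mul_le_mul_of_nonneg_left e3 hq0.le) hδpos.le)
              (by positivity)
        _ ≤ ε * (|a| ^ (q-1) * |a|) := mul_le_mul_of_nonneg_right hδε (by positivity)
        _ = ε * |a| ^ q := by rw [e5]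
    have hb1 : |b| ^ q ≤ (q * (1/δ + 1) ^ (q - 1) + 1) * |b| ^ q := by
      nlinarith [mul_nonneg hCpos (Real.rpow_nonneg (abs_nonneg b) q)]
    linarith
  · -- large b case
    have hb0 : (0:ℝ) ≤ |b| := abs_nonneg b
    have hab : |a| ≤ (1/δ) * |b| := by
      rw [div_mul_eq_mul_div, le_div_iff₀ hδpos, one_mul]
      linarith [mul_comm δ (|a|)]
    have hsum : |a| + |b| ≤ (1/δ + 1) * |b| := by linarith
    have e5 : |b| ^ (q-1) * |b| = |b| ^ q := by
      rw [show q = (q-1)+1 by ring, Real.rpow_add_of_nonneg hb0 (by linarith) zero_le_one,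
        Real.rpow_one]
      norm_num
    have hK : q * (|a| + |b|) ^ (q - 1) * |b| ≤ (q * (1/δ + 1) ^ (q-1)) * |b| ^ q := by
      have e1 : (|a| + |b|) ^ (q - 1) ≤ ((1/δ+1) * |b|) ^ (q - 1) :=
        Real.rpow_le_rpow (by positivity) hsum (by linarith)
      have e2 : ((1/δ+1) * |b|) ^ (q - 1) = (1/δ+1) ^ (q-1) * |b| ^ (q-1) :=
        Real.mul_rpow (by positivity) hb0
      calc q * (|a| + |b|) ^ (q - 1) * |b|
          ≤ q * ((1/δ+1) ^ (q-1) * |b| ^ (q-1)) * |b| := by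
            rw [← e2]
            exact mul_le_mul_of_nonneg_right (mul_le_mul_of_nonneg_left e1 hq0.le) hb0
        _ = (q * (1/δ+1) ^ (q-1)) * (|b| ^ (q-1) * |b|) := by ring
        _ = (q * (1/δ + 1) ^ (q-1)) * |b| ^ q := by rw [e5]
    have hεa : (0:ℝ) ≤ ε * |a| ^ q := by positivity
    linarith

lemma brezis_lieb_s4 {Y : Type*} [MeasurableSpace Y] {ν : Measure Y} {q : ℝ} (hq : 1 ≤ q)
    (u : ℕ → Y → ℝ) (v : Y → ℝ)
    (hu1 : ∀ n, Integrable (fun y => |u n y| ^ q) ν)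
    (hu2 : ∀ n, Integrable (fun y => |u n y - v y| ^ q) ν)
    (hv1 : Integrable (fun y => |v y| ^ q) ν)
    {M : ℝ} (hM : ∀ n, (∫ y, |u n y - v y| ^ q ∂ν) ≤ M)
    (hae : ∀ᵐ y ∂ν, Tendsto (fun n => u n y) atTop (nhds (v y))) :
    Tendsto (fun n => (∫ y, |u n y| ^ q ∂ν) - ∫ y, |u n y - v y| ^ q ∂ν) atTop
      (nhds (∫ y, |v y| ^ q ∂ν)) := by
  have hq0 : (0:ℝ) < q := by linarith
  set φ : ℕ → Y → ℝ := fun n y => |(|u n y| ^ q - |u n y - v y| ^ q - |v y| ^ q)| with hφ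
  have hφint : ∀ n, Integrable (φ n) ν := fun n => (((hu1 n).sub (hu2 n)).sub hv1).abs
  have hM0 : 0 ≤ M := le_trans (integral_nonneg fun y => Real.rpow_nonneg (abs_nonneg _) q) (hM 0)
  -- main step : ∫ φ n → 0
  have htend0 : Tendsto (fun n => ∫ y, φ n y ∂ν) atTop (nhds 0) := by
    rw [Metric.tendsto_atTop]
    intro ε hε
    have hε' : 0 < ε / (2 * (M + 1)) := by positivity
    obtain ⟨C, hC1, hC⟩ := pointwise_eps hq hε'
    set ε' := ε / (2 * (M + 1)) with hε'def
    set W : ℕ → Y → ℝ := fun n y => max (φ n y - ε' * |u n y - v y| ^ q) 0 with hW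
    have hWint : ∀ n, Integrable (W n) ν :=
      fun n => ((hφint n).sub ((hu2 n).const_mul ε')).pos_part
    have hptwise : ∀ n y, φ n y ≤ ε' * |u n y - v y| ^ q + C * |v y| ^ q := by
      intro n y
      have := hC (u n y - v y) (v y)
      simpa using this
    have hWtend : Tendsto (fun n => ∫ y, W n y ∂ν) atTop (nhds 0) := by
      have h0 : (0:ℝ) = ∫ y, (0:ℝ) ∂ν := by simp
      rw [h0]
      apply tendsto_integral_of_dominated_convergence (bound := fun y => C * |v y| ^ q)
        (fun n => (hWint n).aestronglyMeasurable) (hv1.const_mul C)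
      · intro n
        filter_upwards with y
        rw [Real.norm_eq_abs, abs_of_nonneg (le_max_right _ _)]
        apply max_le _ (by positivity)
        have := hptwise n y
        linarith
      · filter_upwards [hae] with y hy
        have hcont : Continuous (fun x : ℝ => |x| ^ q) :=
          (Real.continuous_rpow_const hq0.le).comp continuous_abs
        have t1 : Tendsto (fun n => |u n y| ^ q) atTop (nhds (|v y| ^ q)) :=
          (hcont.tendsto _).comp hy
        have t2 : Tendsto (fun n => |u n y - v y| ^ q) atTop (nhds 0) := by
          have : Tendsto (fun n => u n y - v y) atTop (nhds 0) := by
            simpa using hy.sub (tendsto_const_nhds (x := v y))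
          have := (hcont.tendsto _).comp this
          simpa [Function.comp_def, Real.zero_rpow hq0.ne'] using this
        have tφ : Tendsto (fun n => φ n y) atTop (nhds 0) := by
          have : Tendsto (fun n => |u n y| ^ q - |u n y - v y| ^ q - |v y| ^ q) atTop
              (nhds (|v y| ^ q - 0 - |v y| ^ q)) :=
            (t1.sub t2).sub tendsto_const_nhds
          have habs := this.abs
          simpa [hφ] using habs
        have : Tendsto (fun n => W n y) atTop (nhds (max (0 - ε' * 0) 0)) :=
          (tφ.sub (t2.const_mul ε')).max tendsto_const_nhds
        simpa using this
    have hint_le : ∀ n, (∫ y, φ n y ∂ν) ≤ (∫ y, W n y ∂ν) + ε' * M := by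
      intro n
      have step1 : (∫ y, φ n y ∂ν) ≤ ∫ y, (W n y + ε' * |u n y - v y| ^ q) ∂ν := by
        apply integral_mono (hφint n) ((hWint n).add ((hu2 n).const_mul ε'))
        intro y
        have : φ n y - ε' * |u n y - v y| ^ q ≤ W n y := le_max_left _ _
        simp only [Pi.add_apply]
        linarith
      rw [integral_add (hWint n) ((hu2 n).const_mul ε')] at step1
      have step2 : (∫ y, ε' * |u n y - v y| ^ q ∂ν) ≤ ε' * M := by
        rw [integral_const_mul]
        exact mul_le_mul_of_nonneg_left (hM n) hε'.le
      linarith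
    obtain ⟨N, hN⟩ := (Metric.tendsto_atTop.1 hWtend) (ε / 2) (by positivity)
    refine ⟨N, fun n hn => ?_⟩
    have h1 := hN n hn
    rw [Real.dist_eq, sub_zero] at h1 ⊢
    have hφnn : 0 ≤ ∫ y, φ n y ∂ν := integral_nonneg fun y => abs_nonneg _
    rw [abs_of_nonneg hφnn]
    have h2 : |∫ y, W n y ∂ν| < ε / 2 := h1
    have hε'M : ε' * M < ε / 2 := by
      rw [hε'def, div_mul_eq_mul_div]
      rw [div_lt_div_iff₀ (by positivity) (by positivity)]
      nlinarith
    have := hint_le n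
    have := le_abs_self (∫ y, W n y ∂ν)
    linarith
  -- conclude
  have hdiff : ∀ n, ((∫ y, |u n y| ^ q ∂ν) - ∫ y, |u n y - v y| ^ q ∂ν) - (∫ y, |v y| ^ q ∂ν)
      = ∫ y, (|u n y| ^ q - |u n y - v y| ^ q - |v y| ^ q) ∂ν := by
    intro n
    have e1 : (∫ y, |u n y| ^ q ∂ν) - ∫ y, |u n y - v y| ^ q ∂ν
        = ∫ y, (|u n y| ^ q - |u n y - v y| ^ q) ∂ν := (integral_sub (hu1 n) (hu2 n)).symm
    have e2 : (∫ y, (|u n y| ^ q - |u n y - v y| ^ q) ∂ν) - ∫ y, |v y| ^ q ∂ν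
        = ∫ y, (|u n y| ^ q - |u n y - v y| ^ q - |v y| ^ q) ∂ν :=
      (integral_sub ((hu1 n).sub (hu2 n)) hv1).symm
    rw [e1, e2]
  rw [tendsto_iff_dist_tendsto_zero]
  apply squeeze_zero (fun n => dist_nonneg) _ htend0
  intro n
  rw [Real.dist_eq, hdiff n]
  calc |∫ y, (|u n y| ^ q - |u n y - v y| ^ q - |v y| ^ q) ∂ν|
      = ‖∫ y, (|u n y| ^ q - |u n y - v y| ^ q - |v y| ^ q) ∂ν‖ := (Real.norm_eq_abs _).symm
    _ ≤ ∫ y, ‖(|u n y| ^ q - |u n y - v y| ^ q - |v y| ^ q)‖ ∂ν :=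
        norm_integral_le_integral_norm _
    _ = ∫ y, φ n y ∂ν := by simp only [hφ, Real.norm_eq_abs]

/-- **Hilbert-space version of Lieb's compactness lemma**: for a nonzero bounded linear
operator `A` from a separable Hilbert space `H` into `L^q(Y)` with `q > 2`, a maximizing
sequence of unit vectors converging weakly to a nonzero limit, whose images converge a.e.,
converges strongly and the weak limit is a maximizer. -/
theorem lieb_compactness_hilbert {H : Type*} [NormedAddCommGroup H]
    [InnerProductSpace ℝ H] [CompleteSpace H] [TopologicalSpace.SeparableSpace H]
    {Y : Type*} [MeasurableSpace Y] (ν : Measure Y)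
    (q : ℝ) (hq : 2 < q) [Fact (1 ≤ ENNReal.ofReal q)]
    (A : H →L[ℝ] Lp ℝ (ENNReal.ofReal q) ν) (hA : A ≠ 0)
    (S : ℝ) (hS : S = sSup {c : ℝ | ∃ g : H, ‖g‖ = 1 ∧ c = ‖A g‖ ^ q})
    (f : ℕ → H) (flim : H)
    (hnorm : ∀ n, ‖f n‖ = 1)
    (hmax : Tendsto (fun n => ‖A (f n)‖ ^ q) atTop (nhds S))
    (hweak : ∀ y : H, Tendsto (fun n => ⟪f n, y⟫) atTop (nhds ⟪flim, y⟫))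
    (hflim_ne : flim ≠ 0)
    (hAae : ∀ᵐ y ∂ν, Tendsto (fun n => (A (f n) : Y → ℝ) y) atTop
      (nhds ((A flim : Y → ℝ) y))) :
    Tendsto (fun n => ‖f n - flim‖) atTop (nhds 0) ∧ ‖A flim‖ ^ q = S := by
  have hq0 : (0:ℝ) < q := by linarith
  set p : ℝ≥0∞ := ENNReal.ofReal q with hp
  have hp0 : p ≠ 0 := by simp [hp, ENNReal.ofReal_eq_zero]; linarith
  have hpt : p ≠ ∞ := ENNReal.ofReal_ne_top
  have hpq : p.toReal = q := ENNReal.toReal_ofReal hq0.le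
  -- ‖u‖ ^ q = ∫ |u| ^ q for u : Lp
  have hnorm_rpow : ∀ u : Lp ℝ p ν, ‖u‖ ^ q = ∫ y, |(u : Y → ℝ) y| ^ q ∂ν := by
    intro u
    have h1 := (Lp.memLp u).eLpNorm_eq_integral_rpow_norm hp0 hpt
    have hint : 0 ≤ ∫ y, ‖(u : Y → ℝ) y‖ ^ p.toReal ∂ν :=
      integral_nonneg fun y => Real.rpow_nonneg (norm_nonneg _) _
    rw [Lp.norm_def, h1, ENNReal.toReal_ofReal (Real.rpow_nonneg hint _)]
    rw [hpq, Real.rpow_inv_rpow (by simpa [hpq] using hint) hq0.ne']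
    simp [Real.norm_eq_abs]
  have hint_rpow : ∀ u : Lp ℝ p ν, Integrable (fun y => |(u : Y → ℝ) y| ^ q) ν := by
    intro u
    have := (Lp.memLp u).integrable_norm_rpow hp0 hpt
    simpa [hpq, Real.norm_eq_abs] using this
  -- S facts
  set T : Set ℝ := {c : ℝ | ∃ g : H, ‖g‖ = 1 ∧ c = ‖A g‖ ^ q} with hT
  have hbddT : BddAbove T := by
    refine ⟨‖A‖ ^ q, ?_⟩
    rintro c ⟨g, hg, rfl⟩
    exact Real.rpow_le_rpow (norm_nonneg _) (by simpa [hg] using A.le_opNorm g) hq0.le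
  obtain ⟨g₀, hg₀⟩ : ∃ g₀, A g₀ ≠ 0 := by
    by_contra h
    push_neg at h
    exact hA (ContinuousLinearMap.ext fun g => by simp [h g])
  have hg₀0 : g₀ ≠ 0 := fun h => hg₀ (by simp [h])
  have hSmem : ∀ g : H, g ≠ 0 → ‖A (‖g‖⁻¹ • g)‖ ^ q ≤ S := by
    intro g hg
    have hgn : ‖(‖g‖⁻¹ • g : H)‖ = 1 := by
      rw [norm_smul, norm_inv, norm_norm, inv_mul_cancel₀ (norm_ne_zero_iff.2 hg)]
    rw [hS]
    exact le_csSup hbddT ⟨_, hgn, rfl⟩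
  have hSpos : 0 < S := by
    have h1 : A (‖g₀‖⁻¹ • g₀) ≠ 0 := by
      rw [_root_.map_smul]
      exact smul_ne_zero (inv_ne_zero (norm_ne_zero_iff.2 hg₀0)) hg₀
    calc (0:ℝ) < ‖A (‖g₀‖⁻¹ • g₀)‖ ^ q :=
          Real.rpow_pos_of_pos (norm_pos_iff.2 h1) q
      _ ≤ S := hSmem g₀ hg₀0
  have hbound : ∀ g : H, ‖A g‖ ^ q ≤ S * ‖g‖ ^ q := by
    intro g
    rcases eq_or_ne g 0 with rfl | hg
    · simp [Real.zero_rpow hq0.ne']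
    · have h1 := hSmem g hg
      have h2 : A g = ‖g‖ • A (‖g‖⁻¹ • g) := by
        rw [_root_.map_smul, smul_smul, mul_inv_cancel₀ (norm_ne_zero_iff.2 hg), one_smul]
      have h3 : ‖A g‖ = ‖g‖ * ‖A (‖g‖⁻¹ • g)‖ := by
        rw [h2, norm_smul, norm_norm]
      rw [h3, Real.mul_rpow (norm_nonneg _) (norm_nonneg _), mul_comm S]
      exact mul_le_mul_of_nonneg_left h1 (Real.rpow_nonneg (norm_nonneg g) q)
  -- Hilbert geometry
  set l : ℝ := ‖flim‖ with hl
  have hl0 : 0 < l := norm_pos_iff.2 hflim_ne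
  have hl1 : l ≤ 1 := by
    have h1 : Tendsto (fun n => ⟪f n, flim⟫) atTop (nhds (l ^ 2)) := by
      have := hweak flim
      rwa [real_inner_self_eq_norm_sq] at this
    have h2 : l ^ 2 ≤ l := by
      apply le_of_tendsto h1
      filter_upwards with n
      calc ⟪f n, flim⟫ ≤ |⟪f n, flim⟫| := le_abs_self _
        _ ≤ ‖f n‖ * ‖flim‖ := abs_real_inner_le_norm _ _
        _ = l := by rw [hnorm n, one_mul]
    nlinarith
  have hsq : Tendsto (fun n => ‖f n - flim‖ ^ (2:ℕ)) atTop (nhds (1 - l ^ 2)) := by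
    have h1 : ∀ n, ‖f n - flim‖ ^ (2:ℕ) = 1 - 2 * ⟪f n, flim⟫ + l ^ 2 := by
      intro n
      rw [norm_sub_sq_real, hnorm n]
      norm_num
      rw [hl]
    simp only [h1]
    have h2 := (hweak flim)
    rw [real_inner_self_eq_norm_sq, ← hl] at h2
    have := ((tendsto_const_nhds (x := (1:ℝ))).sub (h2.const_mul 2)).add
      (tendsto_const_nhds (x := l ^ 2))
    convert this using 1
    ring
  set μ : ℝ := Real.sqrt (1 - l ^ 2) with hμ
  have hnormtend : Tendsto (fun n => ‖f n - flim‖) atTop (nhds μ) := by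
    have h1 : ∀ n, ‖f n - flim‖ = Real.sqrt (‖f n - flim‖ ^ (2:ℕ)) :=
      fun n => (Real.sqrt_sq (norm_nonneg _)).symm
    have h2 : Real.sqrt (1 - l ^ 2) = μ := rfl
    rw [funext h1]
    exact (Real.continuous_sqrt.tendsto _).comp hsq
  -- Brezis-Lieb application
  have hsubint : ∀ n, (∫ y, |(A (f n) : Y → ℝ) y - (A flim : Y → ℝ) y| ^ q ∂ν)
      = ‖A (f n) - A flim‖ ^ q := by
    intro n
    rw [hnorm_rpow (A (f n) - A flim)]
    apply integral_congr_ae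
    filter_upwards [Lp.coeFn_sub (A (f n)) (A flim)] with y hy
    rw [hy, Pi.sub_apply]
  have hu2' : ∀ n, Integrable
      (fun y => |(A (f n) : Y → ℝ) y - (A flim : Y → ℝ) y| ^ q) ν := by
    intro n
    apply (hint_rpow (A (f n) - A flim)).congr
    filter_upwards [Lp.coeFn_sub (A (f n)) (A flim)] with y hy
    rw [hy, Pi.sub_apply]
  have hAle : ∀ n, ‖A (f n)‖ ≤ ‖A‖ := fun n => by simpa [hnorm n] using A.le_opNorm (f n)
  have hMbd : ∀ n, (∫ y, |(A (f n) : Y → ℝ) y - (A flim : Y → ℝ) y| ^ q ∂ν)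
      ≤ (‖A‖ + ‖A flim‖) ^ q := by
    intro n
    rw [hsubint n]
    apply Real.rpow_le_rpow (norm_nonneg _) _ hq0.le
    exact (norm_sub_le _ _).trans (add_le_add_left (hAle n) _)
  have hBL0 := brezis_lieb_s4 (by linarith : (1:ℝ) ≤ q)
    (fun n => (A (f n) : Y → ℝ)) ((A flim : Y → ℝ))
    (fun n => hint_rpow (A (f n))) hu2' (hint_rpow (A flim)) hMbd hAae
  have hBL : Tendsto (fun n => ‖A (f n)‖ ^ q - ‖A (f n) - A flim‖ ^ q) atTop
      (nhds (‖A flim‖ ^ q)) := by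
    have e : (fun n => ‖A (f n)‖ ^ q - ‖A (f n) - A flim‖ ^ q)
        = fun n => (∫ y, |(A (f n) : Y → ℝ) y| ^ q ∂ν)
          - ∫ y, |(A (f n) : Y → ℝ) y - (A flim : Y → ℝ) y| ^ q ∂ν :=
      funext fun n => by rw [hnorm_rpow, hsubint]
    rw [e, hnorm_rpow (A flim)]
    exact hBL0
  have hrem : Tendsto (fun n => ‖A (f n) - A flim‖ ^ q) atTop
      (nhds (S - ‖A flim‖ ^ q)) := by
    have := hmax.sub hBL
    simpa using this
  have hup : Tendsto (fun n => S * ‖f n - flim‖ ^ q) atTop (nhds (S * μ ^ q)) :=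
    (((Real.continuous_rpow_const hq0.le).tendsto μ).comp hnormtend).const_mul S
  have hle : S - ‖A flim‖ ^ q ≤ S * μ ^ q := by
    apply le_of_tendsto_of_tendsto' hrem hup
    intro n
    calc ‖A (f n) - A flim‖ ^ q = ‖A (f n - flim)‖ ^ q := by rw [map_sub]
      _ ≤ S * ‖f n - flim‖ ^ q := hbound _
  -- strict convexity forces l = 1
  have hl_eq : l = 1 := by
    by_contra hne
    have hlt : l < 1 := lt_of_le_of_ne hl1 hne
    have hb0 : 0 < 1 - l ^ 2 := by nlinarith
    have hb1 : 1 - l ^ 2 < 1 := by nlinarith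
    have hμq : μ ^ q = (1 - l ^ 2) ^ (q / 2) := by
      rw [hμ, Real.sqrt_eq_rpow, ← Real.rpow_mul hb0.le]
      ring_nf
    have h1 : μ ^ q ≤ 1 - l ^ 2 := by
      rw [hμq]
      calc (1 - l ^ 2) ^ (q / 2) ≤ (1 - l ^ 2) ^ (1:ℝ) :=
            Real.rpow_le_rpow_of_exponent_ge hb0 hb1.le (by linarith)
        _ = 1 - l ^ 2 := Real.rpow_one _
    have h2 : l ^ q < l ^ (2:ℝ) := Real.rpow_lt_rpow_of_exponent_gt hl0 hlt hq
    have h2' : l ^ (2:ℝ) = l ^ (2:ℕ) := by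
      rw [← Real.rpow_natCast l 2]
      norm_num
    have h3 : ‖A flim‖ ^ q ≤ S * l ^ q := hbound flim
    have h4 : S * l ^ q < S * l ^ (2:ℕ) := by
      apply mul_lt_mul_of_pos_left _ hSpos
      rw [← h2']
      exact h2
    have h5 : S * μ ^ q ≤ S * (1 - l ^ 2) := mul_le_mul_of_nonneg_left h1 hSpos.le
    nlinarith
  have hμ0 : μ = 0 := by
    rw [hμ, hl_eq]
    norm_num
  have hfirst : Tendsto (fun n => ‖f n - flim‖) atTop (nhds 0) := by
    rwa [hμ0] at hnormtend
  refine ⟨hfirst, ?_⟩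
  have hstrong : Tendsto f atTop (nhds flim) := by
    rw [tendsto_iff_norm_sub_tendsto_zero]
    exact hfirst
  have hfin : Tendsto (fun n => ‖A (f n)‖ ^ q) atTop (nhds (‖A flim‖ ^ q)) := by
    have h6 : Tendsto (fun n => A (f n)) atTop (nhds (A flim)) :=
      (A.continuous.tendsto flim).comp hstrong
    exact ((Real.continuous_rpow_const hq0.le).tendsto _).comp
      ((continuous_norm.tendsto _).comp h6)
  exact tendsto_nhds_unique hfin hmax
end
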